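/- Let H be an N×M complex matrix. Let W be an N×r complex matrix with WᴴW = I_r and W·Wᴴ·H = H, and let F be an M×r complex matrix with FᴴF = I_r and H·F·Fᴴ = H. Then for every scalar λ ∈ ℂ, det(I_r + λ·Wᴴ·H·Hᴴ·W) = det(I_r + λ·Fᴴ·Hᴴ·H·F). In particular, the downlink spectral efficiency log₂ det(I_r + (P/(rN₀))·WᴴH Hᴴ W) equals the uplink spectral efficiency log₂ det(I_r + (P/(rN₀))·Fᴴ Hᴴ H F) when the uplink and downlink transmit powers are equal. -/
import Mathlib

open Matrix

/-- Uplink–downlink spectral efficiency duality: if `W` has orthonormal columns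
spanning the column space of `H` (`Wᴴ W = I_r`, `W Wᴴ H = H`) and `F` has
orthonormal columns spanning the column space of `Hᴴ` (`Fᴴ F = I_r`,
`H F Fᴴ = H`), then for every `λ ∈ ℂ`,
`det(I_r + λ Wᴴ H Hᴴ W) = det(I_r + λ Fᴴ Hᴴ H F)`. -/
theorem det_uplink_downlink_duality {N M r : ℕ}
    (H : Matrix (Fin N) (Fin M) ℂ)
    (W : Matrix (Fin N) (Fin r) ℂ) (hW : Wᴴ * W = 1) (hWH : W * Wᴴ * H = H)
    (F : Matrix (Fin M) (Fin r) ℂ) (hF : Fᴴ * F = 1) (hHF : H * F * Fᴴ = H)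
    (lam : ℂ) :
    ((1 : Matrix (Fin r) (Fin r) ℂ) + lam • (Wᴴ * H * Hᴴ * W)).det
      = ((1 : Matrix (Fin r) (Fin r) ℂ) + lam • (Fᴴ * Hᴴ * H * F)).det := by
  set A := Wᴴ * H * F with hA
  have h1 : Wᴴ * H * Hᴴ * W = A * Aᴴ := by
    rw [hA]
    calc Wᴴ * H * Hᴴ * W = Wᴴ * (H * F * Fᴴ) * Hᴴ * W := by rw [hHF]
    _ = (Wᴴ * H * F) * (Wᴴ * H * F)ᴴ := by
        simp only [conjTranspose_mul, conjTranspose_conjTranspose]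
        noncomm_ring [Matrix.mul_assoc]
  have h2 : Fᴴ * Hᴴ * H * F = Aᴴ * A := by
    rw [hA]
    calc Fᴴ * Hᴴ * H * F = Fᴴ * Hᴴ * (W * Wᴴ * H) * F := by rw [hWH]
    _ = (Wᴴ * H * F)ᴴ * (Wᴴ * H * F) := by
        simp only [conjTranspose_mul, conjTranspose_conjTranspose]
        noncomm_ring [Matrix.mul_assoc]
  rw [h1, h2, ← mul_smul_comm, det_one_add_mul_comm, smul_mul_assoc]
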